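/- Under the Ambrosetti–Rabinowitz condition (a continuous, 0 < μ·A(t,v) ≤ v·a(t,v) for v ≠ 0), set ℓ = inf{A(t,v) : t ∈ [0,T], |v| = 1}. Then for any ξ ≠ 0 and any continuous v : [0,T] → ℝ, ∫₀^T A(t, ξ·v(t)) dt ≥ ℓ·|ξ|^μ ∫₀^T |v(t)|^μ dt − T·ℓ. -/

import Mathlib

open MeasureTheory Set

/-- under the Ambrosetti–Rabinowitz condition, with
`ℓ = inf{A(t,v) : t ∈ [0,T], |v| = 1}`, for any `ξ ≠ 0` and continuous `v`,
`∫₀ᵀ A(t, ξ·v(t)) dt ≥ ℓ·|ξ|^μ ∫₀ᵀ |v(t)|^μ dt − T·ℓ`. -/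
theorem stmt19 (T μ : ℝ) (hT : 0 < T) (hμ : 0 < μ)
    (a : ℝ → ℝ → ℝ)
    (ha_cont : ContinuousOn (Function.uncurry a) (Set.Icc (0:ℝ) T ×ˢ Set.univ))
    (A : ℝ → ℝ → ℝ)
    (hA : ∀ t x, A t x = ∫ ξ in (0:ℝ)..x, a t ξ)
    (hAR : ∀ t ∈ Set.Icc (0:ℝ) T, ∀ v : ℝ, v ≠ 0 →
      0 < μ * A t v ∧ μ * A t v ≤ v * a t v)
    (ℓ : ℝ)
    (hℓ : ℓ = sInf {y : ℝ | ∃ t ∈ Set.Icc (0:ℝ) T, ∃ v : ℝ, |v| = 1 ∧ y = A t v}) :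
    ∀ ξ : ℝ, ξ ≠ 0 → ∀ v : ℝ → ℝ, Continuous v →
      ℓ * |ξ| ^ μ * (∫ t in (0:ℝ)..T, |v t| ^ μ) - T * ℓ ≤
        ∫ t in (0:ℝ)..T, A t (ξ * v t) := by
  intro ξ hξ v hv
  -- the projection onto [0,T]
  set proj : ℝ → ℝ := fun t => max 0 (min t T) with hprojdef
  have hproj_cont : Continuous proj := continuous_const.max (continuous_id.min continuous_const)
  have hproj_mem : ∀ t, proj t ∈ Icc (0:ℝ) T := by
    intro t
    refine ⟨le_max_left _ _, max_le ?_ (min_le_right _ _)⟩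
    exact hT.le
  have hproj_id : ∀ t ∈ Icc (0:ℝ) T, proj t = t := by
    intro t ht
    simp only [hprojdef]
    rw [min_eq_left ht.2, max_eq_right ht.1]
  -- continuity of a t for t ∈ [0,T]
  have haT : ∀ t ∈ Icc (0:ℝ) T, Continuous (a t) := by
    intro t ht
    have : Continuous fun x : ℝ => Function.uncurry a (t, x) :=
      ha_cont.comp_continuous (continuous_const.prodMk continuous_id)
        (fun x => ⟨ht, mem_univ x⟩)
    exact this
  -- A t 0 = 0
  have hA0 : ∀ t, A t 0 = 0 := by intro t; rw [hA]; simp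
  -- A is positive off 0, nonnegative everywhere (t ∈ [0,T])
  have hApos : ∀ t ∈ Icc (0:ℝ) T, ∀ x : ℝ, x ≠ 0 → 0 < A t x := by
    intro t ht x hx
    have h1 := (hAR t ht x hx).1
    nlinarith
  have hAnn : ∀ t ∈ Icc (0:ℝ) T, ∀ x : ℝ, 0 ≤ A t x := by
    intro t ht x
    rcases eq_or_ne x 0 with rfl | hx
    · rw [hA0]
    · exact (hApos t ht x hx).le
  -- facts about ℓ
  set S : Set ℝ := {y : ℝ | ∃ t ∈ Set.Icc (0:ℝ) T, ∃ w : ℝ, |w| = 1 ∧ y = A t w} with hSdef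
  have hSne : S.Nonempty := ⟨A 0 1, 0, ⟨le_refl 0, hT.le⟩, 1, abs_one, rfl⟩
  have hSbdd : BddBelow S := by
    refine ⟨0, fun y hy => ?_⟩
    obtain ⟨t, ht, w, hw, rfl⟩ := hy
    exact hAnn t ht w
  have hℓ0 : 0 ≤ ℓ := by
    rw [hℓ]
    exact le_csInf hSne (fun y hy => by
      obtain ⟨t, ht, w, hw, rfl⟩ := hy
      exact hAnn t ht w)
  have hℓle : ∀ t ∈ Icc (0:ℝ) T, ∀ u : ℝ, |u| = 1 → ℓ ≤ A t u := by
    intro t ht u hu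
    rw [hℓ]
    exact csInf_le hSbdd ⟨t, ht, u, hu, rfl⟩
  -- growth estimate: A t x ≥ ℓ |x|^μ for |x| ≥ 1
  have hgrow : ∀ t ∈ Icc (0:ℝ) T, ∀ x : ℝ, 1 ≤ |x| → ℓ * |x| ^ μ ≤ A t x := by
    intro t ht x hx1
    have hx0 : x ≠ 0 := by
      intro h; rw [h, abs_zero] at hx1; linarith
    have habs : (0:ℝ) < |x| := lt_of_lt_of_le one_pos hx1
    set u : ℝ := x / |x| with hudef
    have hu : |u| = 1 := by
      rw [hudef, abs_div, abs_abs, div_self habs.ne']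
    have hu0 : u ≠ 0 := by
      intro h; rw [h, abs_zero] at hu; norm_num at hu
    set r : ℝ := |x| with hrdef
    have hru : r * u = x := by
      rw [hudef, hrdef]; field_simp
    have hat : Continuous (a t) := haT t ht
    -- derivative of s ↦ A t (s * u)
    have hderiv : ∀ s : ℝ, HasDerivAt (fun s : ℝ => A t (s * u)) (a t (s * u) * u) s := by
      intro s
      have h1 : HasDerivAt (fun y : ℝ => ∫ ζ in (0:ℝ)..y, a t ζ) (a t (s * u)) (s * u) :=
        intervalIntegral.integral_hasDerivAt_right (hat.intervalIntegrable _ _)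
          (hat.stronglyMeasurableAtFilter _ _) hat.continuousAt
      have h2 : HasDerivAt (fun s : ℝ => s * u) u s := hasDerivAt_mul_const u
      have := h1.comp s h2
      simp only [Function.comp_def, ← hA] at this
      simpa using this
    -- F s = A t (s u) * s^(-μ)
    set F : ℝ → ℝ := fun s => A t (s * u) * s ^ (-μ) with hFdef
    have hFderiv : ∀ s : ℝ, s ≠ 0 →
        HasDerivAt F (a t (s * u) * u * s ^ (-μ) + A t (s * u) * (-μ * s ^ (-μ - 1))) s := by
      intro s hs
      have h3 : HasDerivAt (fun s : ℝ => s ^ (-μ)) (-μ * s ^ (-μ - 1)) s :=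
        Real.hasDerivAt_rpow_const (Or.inl hs)
      exact (hderiv s).mul h3
    -- F is monotone on [1, r]
    have hmono : MonotoneOn F (Icc 1 r) := by
      apply monotoneOn_of_deriv_nonneg (convex_Icc 1 r)
      · intro s hs
        have hs0 : s ≠ 0 := by have := hs.1; intro h; rw [h] at this; linarith
        exact (hFderiv s hs0).continuousAt.continuousWithinAt
      · intro s hs
        rw [interior_Icc] at hs
        have hs0 : s ≠ 0 := by have := hs.1; intro h; rw [h] at this; linarith
        exact (hFderiv s hs0).differentiableAt.differentiableWithinAt
      · intro s hs
        rw [interior_Icc] at hs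
        have hs1 : (1:ℝ) < s := hs.1
        have hs0 : (0:ℝ) < s := lt_trans one_pos hs1
        rw [(hFderiv s hs0.ne').deriv]
        have hsu0 : s * u ≠ 0 := mul_ne_zero hs0.ne' hu0
        have hAR2 := (hAR t ht (s * u) hsu0).2
        have hpow : (0:ℝ) < s ^ (-μ - 1) := Real.rpow_pos_of_pos hs0 _
        have hsplit : s ^ (-μ) = s ^ (-μ - 1) * s := by
          rw [← Real.rpow_add_one hs0.ne' (-μ - 1)]; ring_nf
        rw [hsplit]
        nlinarith [hAR2, hpow]
    have h1mem : (1:ℝ) ∈ Icc (1:ℝ) r := ⟨le_refl 1, hx1⟩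
    have hrmem : r ∈ Icc (1:ℝ) r := ⟨hx1, le_refl r⟩
    have hFF := hmono h1mem hrmem hx1
    have hF1 : F 1 = A t u := by
      simp only [hFdef]
      rw [Real.one_rpow, one_mul, mul_one]
    have hFr : F r = A t x * r ^ (-μ) := by rw [hFdef]; simp only [hru]
    have hℓu : ℓ ≤ A t u := hℓle t ht u hu
    have hkey : ℓ ≤ A t x * r ^ (-μ) := by
      calc ℓ ≤ A t u := hℓu
        _ = F 1 := hF1.symm
        _ ≤ F r := hFF
        _ = A t x * r ^ (-μ) := hFr
    have hrpos : (0:ℝ) < r := habs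
    have hcancel : r ^ (-μ) * r ^ μ = 1 := by
      rw [← Real.rpow_add hrpos]; simp
    have hrμpos : (0:ℝ) < r ^ μ := Real.rpow_pos_of_pos hrpos μ
    calc ℓ * |x| ^ μ = ℓ * r ^ μ := by rw [hrdef]
      _ ≤ (A t x * r ^ (-μ)) * r ^ μ := by
          exact mul_le_mul_of_nonneg_right hkey hrμpos.le
      _ = A t x * (r ^ (-μ) * r ^ μ) := by ring
      _ = A t x := by rw [hcancel, mul_one]
  -- pointwise bound
  have key : ∀ t ∈ Icc (0:ℝ) T, ∀ x : ℝ, ℓ * |x| ^ μ - ℓ ≤ A t x := by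
    intro t ht x
    rcases le_or_gt 1 |x| with h1 | h1
    · have := hgrow t ht x h1
      linarith
    · have hle1 : |x| ^ μ ≤ 1 := Real.rpow_le_one (abs_nonneg x) h1.le hμ.le
      have h2 : ℓ * |x| ^ μ ≤ ℓ := by
        nlinarith
      have := hAnn t ht x
      linarith
  -- continuity of the integrand on [0,T]
  have haext : Continuous (Function.uncurry fun t x : ℝ => a (proj t) x) := by
    have : Continuous fun p : ℝ × ℝ => Function.uncurry a (proj p.1, p.2) :=
      ha_cont.comp_continuous ((hproj_cont.comp continuous_fst).prodMk continuous_snd)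
        (fun p => ⟨hproj_mem _, mem_univ _⟩)
    exact this
  have hfcont' : Continuous fun t => ∫ ζ in (0:ℝ)..(ξ * v t), a (proj t) ζ :=
    intervalIntegral.continuous_parametric_intervalIntegral_of_continuous haext
      (continuous_const.mul hv)
  have hfcontOn : ContinuousOn (fun t => A t (ξ * v t)) (Icc (0:ℝ) T) := by
    apply ContinuousOn.congr hfcont'.continuousOn
    intro t ht
    show A t (ξ * v t) = ∫ ζ in (0:ℝ)..(ξ * v t), a (proj t) ζ
    rw [hA, hproj_id t ht]
  -- integrability
  have hf_int : IntervalIntegrable (fun t => A t (ξ * v t)) volume 0 T := by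
    apply ContinuousOn.intervalIntegrable
    rwa [uIcc_of_le hT.le]
  have hvμcont : Continuous fun t => |v t| ^ μ :=
    hv.abs.rpow_const (fun t => Or.inr hμ.le)
  have hg_cont : Continuous fun t => ℓ * |ξ| ^ μ * |v t| ^ μ - ℓ :=
    ((continuous_const.mul hvμcont).sub continuous_const)
  have hg_int : IntervalIntegrable (fun t => ℓ * |ξ| ^ μ * |v t| ^ μ - ℓ) volume 0 T :=
    hg_cont.intervalIntegrable _ _
  -- compare integrals
  have hmono2 : (∫ t in (0:ℝ)..T, (ℓ * |ξ| ^ μ * |v t| ^ μ - ℓ)) ≤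
      ∫ t in (0:ℝ)..T, A t (ξ * v t) := by
    apply intervalIntegral.integral_mono_on hT.le hg_int hf_int
    intro t ht
    have h1 := key t ht (ξ * v t)
    have h2 : |ξ * v t| ^ μ = |ξ| ^ μ * |v t| ^ μ := by
      rw [abs_mul, Real.mul_rpow (abs_nonneg _) (abs_nonneg _)]
    rw [h2] at h1
    linarith
  -- compute the left integral
  have hcomp : (∫ t in (0:ℝ)..T, (ℓ * |ξ| ^ μ * |v t| ^ μ - ℓ)) =
      ℓ * |ξ| ^ μ * (∫ t in (0:ℝ)..T, |v t| ^ μ) - T * ℓ := by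
    rw [intervalIntegral.integral_sub (f := fun t => ℓ * |ξ| ^ μ * |v t| ^ μ)
        ((continuous_const.mul hvμcont).intervalIntegrable _ _)
        (intervalIntegrable_const)]
    rw [intervalIntegral.integral_const_mul, intervalIntegral.integral_const]
    simp
  linarith [hmono2, hcomp.symm.le]
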